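/- Let m ≥ 2 be even, k₁, k₂ integers, d₁ = gcd(k₁,m), d₂ = gcd(k₂,m), d₃ = gcd(d₁,d₂), and let A ⊆ ℤ_m with |A| = m/2, B = ℤ_m \ A. Then r̂_{k₁,k₂}(A,n) = r̂_{k₁,k₂}(B,n) holds for a given n ∈ ℤ_m if and only if d₁·#{a ∈ A : d₁ | k₂a − n} + d₂·#{a ∈ A : d₂ | k₁a − n} = d₁·#{b ∈ B : d₁ | k₂b − n} + d₂·#{b ∈ B : d₂ | k₁b − n}. -/

import Mathlib

open Finset

lemma card_filter_prod {α β : Type*} [DecidableEq α] [DecidableEq β]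
    (X : Finset α) (Y : Finset β) (p : α → β → Prop) [∀ a b, Decidable (p a b)] :
    ((X ×ˢ Y).filter fun z => p z.1 z.2).card = ∑ a ∈ X, (Y.filter fun y => p a y).card := by
  rw [Finset.card_eq_sum_card_fiberwise (f := Prod.fst) (t := X)
    (by intro z hz; simp only [mem_coe, mem_filter, mem_product] at hz; exact hz.1.1)]
  refine Finset.sum_congr rfl fun a ha => ?_
  apply Finset.card_nbij' (i := Prod.snd) (j := fun y => (a, y)) <;>
    intro x hx <;> simp only [mem_filter, mem_product, mem_coe] at hx ⊢
  · obtain ⟨⟨⟨-,h2⟩,h3⟩,h4⟩ := hx; exact ⟨h2, h4 ▸ h3⟩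
  · exact ⟨⟨⟨ha, hx.1⟩, hx.2⟩, trivial⟩
  · obtain ⟨⟨⟨-,-⟩,-⟩,h4⟩ := hx; exact Prod.ext h4.symm rfl

lemma split_card {α : Type*} [DecidableEq α] [Fintype α] (S : Finset α)
    (q : α → Prop) [DecidablePred q] :
    (univ.filter q).card = (S.filter q).card + (Sᶜ.filter q).card := by
  rw [← Finset.card_union_of_disjoint (Finset.disjoint_filter_filter disjoint_compl_right),
    ← Finset.filter_union, Finset.union_compl]

variable {m : ℕ} [NeZero m]

lemma ker_card (k : ℤ) :
    (univ.filter fun y : ZMod m => (k : ZMod m) * y = 0).card = Int.gcd k m := by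
  have hm0 : (m : ℤ) ≠ 0 := Int.natCast_ne_zero.mpr (NeZero.ne m)
  set d : ℕ := Int.gcd k m with hd
  have hd0 : 0 < d := Int.gcd_pos_of_ne_zero_right _ hm0
  have hdm : d ∣ m := by
    have := Int.gcd_dvd_right (a := k) (b := (m : ℤ))
    exact_mod_cast Int.ofNat_dvd.mp (by exact_mod_cast this)
  set m' : ℕ := m / d with hm'
  have hmm : m = d * m' := (Nat.mul_div_cancel' hdm).symm
  have hm'0 : 0 < m' := by
    rcases Nat.eq_zero_or_pos m' with h | h
    · exact absurd (hmm.trans (by rw [h, mul_zero])) (NeZero.ne m)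
    · exact h
  have hcond : ∀ y : ZMod m, ((k : ZMod m) * y = 0) ↔ m' ∣ y.val := by
    intro y
    have hy : ((y.val : ℤ) : ZMod m) = y := by
      rw [Int.cast_natCast]; exact ZMod.natCast_rightInverse y
    have hrew : (k : ZMod m) * y = ((k * (y.val : ℤ) : ℤ) : ZMod m) := by
      rw [Int.cast_mul, hy]
    rw [hrew, ZMod.intCast_zmod_eq_zero_iff_dvd]
    have hk : (d : ℤ) ∣ k := Int.gcd_dvd_left k m
    obtain ⟨k₁, hk₁⟩ := hk
    have hcop : Int.gcd k₁ (m' : ℤ) = 1 := by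
      have := Int.gcd_div_gcd_div_gcd (i := k) (j := (m : ℤ)) (by exact_mod_cast hd0)
      have hne : (d:ℤ) ≠ 0 := by exact_mod_cast hd0.ne'
      have e1 : k / (Int.gcd k m : ℤ) = k₁ := by
        rw [← hd, hk₁]
        exact Int.mul_ediv_cancel_left _ hne
      have e2 : (m : ℤ) / (Int.gcd k m : ℤ) = (m' : ℤ) := by
        rw [← hd, hmm]; push_cast
        exact Int.mul_ediv_cancel_left _ hne
      rwa [e1, e2] at this
    constructor
    · intro h
      have h2 : (m' : ℤ) ∣ k₁ * (y.val : ℤ) := by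
        have : ((d : ℤ) * m') ∣ ((d : ℤ) * (k₁ * y.val)) := by
          rw [← mul_assoc, ← hk₁]
          exact (by push_cast [hmm] at h ⊢; exact h)
        exact (mul_dvd_mul_iff_left (show (d:ℤ) ≠ 0 by exact_mod_cast hd0.ne')).mp this
      have := Int.dvd_of_dvd_mul_right_of_gcd_one h2 (by rwa [Int.gcd_comm])
      exact_mod_cast this
    · intro h
      obtain ⟨t, ht⟩ := h
      have : k * (y.val : ℤ) = (m : ℤ) * (k₁ * t) := by
        rw [hk₁]
        push_cast [hmm, ht]
        ring
      exact ⟨k₁ * t, this⟩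
  have hfe : (univ.filter fun y : ZMod m => (k : ZMod m) * y = 0)
      = (univ.filter fun y : ZMod m => m' ∣ y.val) := by
    apply Finset.filter_congr
    intro y _
    simp [hcond y]
  rw [hfe, ← Finset.card_range d]
  apply Finset.card_nbij' (i := fun y => y.val / m') (j := fun i => ((i * m' : ℕ) : ZMod m))
  · intro y hy
    simp only [mem_coe, mem_filter, mem_univ, true_and] at hy
    simp only [mem_coe, mem_range]
    have : y.val < m := ZMod.val_lt y
    rw [Nat.div_lt_iff_lt_mul hm'0]
    omega
  · intro i hi
    simp only [mem_coe, mem_range] at hi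
    simp only [mem_coe, mem_filter, mem_univ, true_and]
    have hlt : i * m' < m := by
      rw [hmm]; exact (Nat.mul_lt_mul_right hm'0).mpr hi
    rw [ZMod.val_cast_of_lt hlt]
    exact ⟨i, mul_comm i m'⟩
  · intro y hy
    simp only [mem_coe, mem_filter, mem_univ, true_and] at hy
    dsimp only; rw [Nat.div_mul_cancel hy]
    exact ZMod.natCast_rightInverse y
  · intro i hi
    simp only [mem_coe, mem_range] at hi
    have hlt : i * m' < m := by
      rw [hmm]; exact (Nat.mul_lt_mul_right hm'0).mpr hi
    dsimp only; rw [ZMod.val_cast_of_lt hlt, Nat.mul_div_cancel _ hm'0]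

lemma solvable_iff (k : ℤ) (c : ZMod m) :
    (∃ y : ZMod m, (k : ZMod m) * y = c) ↔ (Int.gcd k m : ℤ) ∣ (c.val : ℤ) := by
  have hc : ((c.val : ℤ) : ZMod m) = c := by
    rw [Int.cast_natCast]; exact ZMod.natCast_rightInverse c
  constructor
  · rintro ⟨y, hy⟩
    have hy' : ((y.val : ℤ) : ZMod m) = y := by
      rw [Int.cast_natCast]; exact ZMod.natCast_rightInverse y
    have h0 : ((k * (y.val : ℤ) - (c.val : ℤ) : ℤ) : ZMod m) = 0 := by
      push_cast
      rw [ZMod.natCast_rightInverse y, ZMod.natCast_rightInverse c, hy, sub_self]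
    rw [ZMod.intCast_zmod_eq_zero_iff_dvd] at h0
    obtain ⟨t, ht⟩ := h0
    have h1 : (Int.gcd k m : ℤ) ∣ k := Int.gcd_dvd_left k m
    have h2 : (Int.gcd k m : ℤ) ∣ (m : ℤ) := Int.gcd_dvd_right k m
    have : (c.val : ℤ) = k * y.val - m * t := by omega
    rw [this]
    exact dvd_sub (h1.mul_right _) (h2.mul_right _)
  · rintro ⟨t, ht⟩
    refine ⟨((Int.gcdA k m * t : ℤ) : ZMod m), ?_⟩
    have hbez : (Int.gcd k m : ℤ) = k * Int.gcdA k m + m * Int.gcdB k m := Int.gcd_eq_gcd_ab k m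
    have : (k * (Int.gcdA k m * t) : ℤ) = (c.val : ℤ) - m * (Int.gcdB k m * t) := by
      rw [ht, hbez]; ring
    calc (k : ZMod m) * ((Int.gcdA k m * t : ℤ) : ZMod m)
        = ((k * (Int.gcdA k m * t) : ℤ) : ZMod m) := by push_cast; ring
      _ = (((c.val : ℤ) - m * (Int.gcdB k m * t) : ℤ) : ZMod m) := by rw [this]
      _ = c := by
          push_cast [ZMod.natCast_self]
          rw [ZMod.natCast_rightInverse c]
          ring

lemma fiber_card (k : ℤ) (c : ZMod m) :
    (univ.filter fun y : ZMod m => (k : ZMod m) * y = c).card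
      = if (Int.gcd k m : ℤ) ∣ (c.val : ℤ) then Int.gcd k m else 0 := by
  by_cases h : (Int.gcd k m : ℤ) ∣ (c.val : ℤ)
  · rw [if_pos h]
    obtain ⟨y₀, hy₀⟩ := (solvable_iff k c).mpr h
    rw [← ker_card (m := m) k]
    apply Finset.card_nbij' (i := fun y => y - y₀) (j := fun y => y + y₀)
    · intro y hy
      simp only [mem_filter, mem_univ, true_and, mem_coe] at hy ⊢
      rw [mul_sub, hy, hy₀, sub_self]
    · intro y hy
      simp only [mem_filter, mem_univ, true_and, mem_coe] at hy ⊢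
      rw [mul_add, hy, hy₀, zero_add]
    · intro y _; simp
    · intro y _; simp
  · rw [if_neg h]
    rw [Finset.card_eq_zero, Finset.filter_eq_empty_iff]
    intro y _
    exact fun hy => h ((solvable_iff k c).mp ⟨y, hy⟩)

lemma dvd_transfer {d : ℕ} (hdm : (d : ℤ) ∣ (m : ℤ)) (x : ZMod m) (z : ℤ)
    (hz : (z : ZMod m) = x) : ((d : ℤ) ∣ (x.val : ℤ)) ↔ (d : ℤ) ∣ z := by
  have h0 : ((z - (x.val : ℤ) : ℤ) : ZMod m) = 0 := by
    push_cast
    rw [hz, ZMod.natCast_rightInverse x, sub_self]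
  rw [ZMod.intCast_zmod_eq_zero_iff_dvd] at h0
  have hd : (d : ℤ) ∣ z - (x.val : ℤ) := hdm.trans h0
  constructor
  · intro h; have := dvd_add hd h; simpa using this
  · intro h; have := dvd_sub h hd; simpa using this

lemma row_count (ka kb : ℤ) (n : ZMod m) (S : Finset (ZMod m)) :
    ((S ×ˢ (univ : Finset (ZMod m))).filter
        fun p => (ka : ZMod m) * p.1 + (kb : ZMod m) * p.2 = n).card
      = Int.gcd kb m * (S.filter fun a => (Int.gcd kb m : ℤ) ∣ ka * (a.val : ℤ) - (n.val : ℤ)).card := by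
  have hdm : ((Int.gcd kb m : ℕ) : ℤ) ∣ (m : ℤ) := Int.gcd_dvd_right kb m
  rw [card_filter_prod S univ (fun a y => (ka : ZMod m) * a + (kb : ZMod m) * y = n)]
  have hinner : ∀ a ∈ S, (univ.filter fun y : ZMod m => (ka : ZMod m) * a + (kb : ZMod m) * y = n).card
      = if (Int.gcd kb m : ℤ) ∣ ka * (a.val : ℤ) - (n.val : ℤ) then Int.gcd kb m else 0 := by
    intro a _
    have he : (univ.filter fun y : ZMod m => (ka : ZMod m) * a + (kb : ZMod m) * y = n)
        = (univ.filter fun y : ZMod m => (kb : ZMod m) * y = n - (ka : ZMod m) * a) := by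
      apply Finset.filter_congr
      intro y _
      constructor
      · intro h; rw [← h]; ring
      · intro h; rw [h]; ring
    rw [he, fiber_card]
    have hz : (((n.val : ℤ) - ka * (a.val : ℤ) : ℤ) : ZMod m) = n - (ka : ZMod m) * a := by
      push_cast
      rw [ZMod.natCast_rightInverse n, ZMod.natCast_rightInverse a]
    have hiff : ((Int.gcd kb m : ℤ) ∣ (((n - (ka : ZMod m) * a).val : ℕ) : ℤ))
        ↔ ((Int.gcd kb m : ℤ) ∣ ka * (a.val : ℤ) - (n.val : ℤ)) := by
      rw [dvd_transfer hdm _ _ hz]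
      constructor
      · intro h; simpa using h.neg_right
      · intro h; simpa using h.neg_right
    rw [if_congr hiff rfl rfl]
  rw [Finset.sum_congr rfl hinner, ← Finset.sum_filter, Finset.sum_const, smul_eq_mul, mul_comm]

lemma col_count (ka kb : ℤ) (n : ZMod m) (S : Finset (ZMod m)) :
    (((univ : Finset (ZMod m)) ×ˢ S).filter
        fun p => (ka : ZMod m) * p.1 + (kb : ZMod m) * p.2 = n).card
      = Int.gcd ka m * (S.filter fun b => (Int.gcd ka m : ℤ) ∣ kb * (b.val : ℤ) - (n.val : ℤ)).card := by
  rw [← row_count kb ka n S]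
  apply Finset.card_nbij' (i := Prod.swap) (j := Prod.swap) <;>
    intro p hp <;>
    simp only [mem_filter, mem_product, mem_univ, true_and, and_true, mem_coe,
      Prod.fst_swap, Prod.snd_swap, Prod.swap_swap] at hp ⊢
  · exact ⟨hp.1, by rw [← hp.2]; ring⟩
  · exact ⟨hp.1, by rw [← hp.2]; ring⟩

lemma key_id (p : ZMod m → ZMod m → Prop) [∀ a b, Decidable (p a b)] (S : Finset (ZMod m)) :
    ((S ×ˢ S).filter fun z => p z.1 z.2).card
      + (((univ : Finset (ZMod m)) ×ˢ (univ : Finset (ZMod m))).filter fun z => p z.1 z.2).card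
    = ((Sᶜ ×ˢ Sᶜ).filter fun z => p z.1 z.2).card
      + ((S ×ˢ (univ : Finset (ZMod m))).filter fun z => p z.1 z.2).card
      + (((univ : Finset (ZMod m)) ×ˢ S).filter fun z => p z.1 z.2).card := by
  rw [card_filter_prod S S p, card_filter_prod univ univ p, card_filter_prod Sᶜ Sᶜ p,
    card_filter_prod S univ p, card_filter_prod univ S p]
  have hsplit : ∀ a : ZMod m, (univ.filter fun y => p a y).card
      = (S.filter fun y => p a y).card + (Sᶜ.filter fun y => p a y).card := fun a =>
    split_card S (p a)
  have husplit : ∀ f : ZMod m → ℕ, ∑ a : ZMod m, f a = ∑ a ∈ S, f a + ∑ a ∈ Sᶜ, f a :=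
    fun f => (Finset.sum_add_sum_compl S f).symm
  simp only [hsplit]
  rw [husplit (fun a => (S.filter fun y => p a y).card + (Sᶜ.filter fun y => p a y).card),
      husplit (fun a => (S.filter fun y => p a y).card)]
  simp only [Finset.sum_add_distrib]
  ring

def rhat (m : ℕ) (k1 k2 : ℤ) (A : Finset (ZMod m)) (n : ZMod m) : ℕ :=
  ((A ×ˢ A).filter (fun p => (k1 : ZMod m) * p.1 + (k2 : ZMod m) * p.2 = n)).card

theorem stmt6 (m : ℕ) [NeZero m] (hm : 2 ≤ m) (hme : Even m) (k1 k2 : ℤ)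
    (d1 d2 d3 : ℕ) (hd1 : d1 = Int.gcd k1 m) (hd2 : d2 = Int.gcd k2 m) (hd3 : d3 = Nat.gcd d1 d2)
    (A : Finset (ZMod m)) (hA : 2 * A.card = m) (n : ZMod m) :
    rhat m k1 k2 A n = rhat m k1 k2 Aᶜ n ↔
      d1 * (A.filter (fun a => (d1 : ℤ) ∣ k2 * (a.val : ℤ) - (n.val : ℤ))).card
        + d2 * (A.filter (fun a => (d2 : ℤ) ∣ k1 * (a.val : ℤ) - (n.val : ℤ))).card
      = d1 * (Aᶜ.filter (fun b => (d1 : ℤ) ∣ k2 * (b.val : ℤ) - (n.val : ℤ))).card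
        + d2 * (Aᶜ.filter (fun b => (d2 : ℤ) ∣ k1 * (b.val : ℤ) - (n.val : ℤ))).card := by
  subst hd1 hd2
  have e1 := key_id (fun a b => (k1 : ZMod m) * a + (k2 : ZMod m) * b = n) A
  have e2 := key_id (fun a b => (k1 : ZMod m) * a + (k2 : ZMod m) * b = n) Aᶜ
  rw [compl_compl] at e2
  beta_reduce at e1 e2
  have rA := row_count k1 k2 n (m := m) A
  have rB := row_count k1 k2 n (m := m) Aᶜ
  have cA := col_count k1 k2 n (m := m) A
  have cB := col_count k1 k2 n (m := m) Aᶜ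
  rw [rA, cA] at e1
  rw [rB, cB] at e2
  show ((A ×ˢ A).filter fun z => (k1 : ZMod m) * z.1 + (k2 : ZMod m) * z.2 = n).card
      = ((Aᶜ ×ˢ Aᶜ).filter fun z => (k1 : ZMod m) * z.1 + (k2 : ZMod m) * z.2 = n).card ↔ _
  generalize ((A ×ˢ A).filter fun z => (k1 : ZMod m) * z.1 + (k2 : ZMod m) * z.2 = n).card = sAA at e1 e2 ⊢
  generalize ((Aᶜ ×ˢ Aᶜ).filter fun z => (k1 : ZMod m) * z.1 + (k2 : ZMod m) * z.2 = n).card = sBB at e1 e2 ⊢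
  generalize (((univ : Finset (ZMod m)) ×ˢ (univ : Finset (ZMod m))).filter
      fun z => (k1 : ZMod m) * z.1 + (k2 : ZMod m) * z.2 = n).card = N at e1 e2
  generalize Int.gcd k2 m * (A.filter fun a => (Int.gcd k2 m : ℤ) ∣ k1 * (a.val : ℤ) - (n.val : ℤ)).card = x2A at e1 ⊢
  generalize Int.gcd k1 m * (A.filter fun a => (Int.gcd k1 m : ℤ) ∣ k2 * (a.val : ℤ) - (n.val : ℤ)).card = x1A at e1 ⊢
  generalize Int.gcd k2 m * (Aᶜ.filter fun a => (Int.gcd k2 m : ℤ) ∣ k1 * (a.val : ℤ) - (n.val : ℤ)).card = x2B at e2 ⊢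
  generalize Int.gcd k1 m * (Aᶜ.filter fun a => (Int.gcd k1 m : ℤ) ∣ k2 * (a.val : ℤ) - (n.val : ℤ)).card = x1B at e2 ⊢
  omega
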